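/- Let T be the 2×2 matrix with real entries, with rows (a, b) and (c, d), acting on ℓ_p², and let Tᵗ denote its transpose, also acting on ℓ_p². Then V_p(Tᵗ) is the mirror image of V_p(T) with respect to the vertical line Re z = (a + d)/2; that is, V_p(Tᵗ) = { (a + d) − conj(z) : z ∈ V_p(T) }. -/

import Mathlib

open Complex Real

/-- The `ℓ_p` norm on `ℂ²`. -/
noncomputable def lpNorm (p : ℝ) (x : Fin 2 → ℂ) : ℝ :=
  (∑ k, ‖x k‖ ^ p) ^ (1 / p)

/-- The numerical range of a `2 × 2` complex matrix acting on `ℓ_p²`.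
Note that when `x k = 0` the corresponding term vanishes since `conj (x k) = 0`. -/
noncomputable def numRange (p : ℝ) (T : Matrix (Fin 2) (Fin 2) ℂ) : Set ℂ :=
  { z | ∃ x : Fin 2 → ℂ, lpNorm p x = 1 ∧
      z = ∑ k, T.mulVec x k * (starRingEnd ℂ) (x k) * ((‖x k‖ ^ (p - 2) : ℝ) : ℂ) }

/-- The numerical radius of a `2 × 2` complex matrix acting on `ℓ_p²`. -/
noncomputable def numRadius (p : ℝ) (T : Matrix (Fin 2) (Fin 2) ℂ) : ℝ :=
  sSup ((fun z : ℂ => ‖z‖) '' numRange p T)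

lemma habs_key (p : ℝ) (hp : 1 < p) (z : ℂ) :
    z * (starRingEnd ℂ) z * ((‖z‖ ^ (p - 2) : ℝ) : ℂ)
      = ((‖z‖ ^ p : ℝ) : ℂ) := by
  rw [Complex.mul_conj, Complex.normSq_eq_norm_sq]
  by_cases h : z = 0
  · simp [h, Real.zero_rpow (by linarith : p ≠ 0)]
  · have hz : 0 < ‖z‖ := norm_pos_iff.mpr h
    rw [← Complex.ofReal_mul]
    congr 1
    rw [← Real.rpow_natCast ‖z‖ 2, ← Real.rpow_add hz]
    norm_num

lemma lpNorm_sum_eq_one (p : ℝ) (hp : 1 < p) (x : Fin 2 → ℂ)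
    (hx : lpNorm p x = 1) :
    ‖x 0‖ ^ p + ‖x 1‖ ^ p = 1 := by
  have hp0 : p ≠ 0 := by linarith
  have hs : (0:ℝ) ≤ ∑ k, ‖x k‖ ^ p :=
    Finset.sum_nonneg fun k _ => Real.rpow_nonneg (norm_nonneg _) _
  have h := congrArg (· ^ p) hx
  simp only [lpNorm] at h
  rw [← Real.rpow_mul hs, one_div, inv_mul_cancel₀ hp0, Real.rpow_one, Real.one_rpow] at h
  simpa [Fin.sum_univ_two] using h

lemma key_lemma (p : ℝ) (hp : 1 < p) (a b c d : ℝ) (x : Fin 2 → ℂ)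
    (hx : lpNorm p x = 1) :
    lpNorm p ![-(starRingEnd ℂ) (x 1), (starRingEnd ℂ) (x 0)] = 1 ∧
    (∑ k, (!![(a : ℂ), (c : ℂ); (b : ℂ), (d : ℂ)]).mulVec
        ![-(starRingEnd ℂ) (x 1), (starRingEnd ℂ) (x 0)] k
        * (starRingEnd ℂ) (![-(starRingEnd ℂ) (x 1), (starRingEnd ℂ) (x 0)] k)
        * ((‖![-(starRingEnd ℂ) (x 1), (starRingEnd ℂ) (x 0)] k‖ ^ (p - 2) : ℝ) : ℂ))
      = ((a : ℂ) + (d : ℂ)) - (starRingEnd ℂ)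
          (∑ k, (!![(a : ℂ), (b : ℂ); (c : ℂ), (d : ℂ)]).mulVec x k
            * (starRingEnd ℂ) (x k) * ((‖x k‖ ^ (p - 2) : ℝ) : ℂ)) := by
  constructor
  · simp only [lpNorm, Fin.sum_univ_two, Matrix.cons_val_zero, Matrix.cons_val_one,
      Matrix.head_cons, map_neg, norm_neg, Complex.norm_conj]
    rw [add_comm]
    simpa [lpNorm, Fin.sum_univ_two] using hx
  · have h0 := habs_key p hp (x 0)
    have h1 := habs_key p hp (x 1)
    have hs := lpNorm_sum_eq_one p hp x hx
    have hsC : ((‖x 0‖ ^ p : ℝ) : ℂ) + ((‖x 1‖ ^ p : ℝ) : ℂ) = 1 := by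
      rw [← Complex.ofReal_add, hs, Complex.ofReal_one]
    simp only [Fin.sum_univ_two, Matrix.mulVec, dotProduct, Matrix.cons_val_zero,
      Matrix.cons_val_one, Matrix.head_cons, Matrix.cons_val', Matrix.empty_val',
      Matrix.cons_val_fin_one, Matrix.head_fin_const, Matrix.of_apply, map_add, map_mul, map_neg, map_sub,
      Complex.conj_conj, Complex.conj_ofReal, norm_neg, Complex.norm_conj]
    linear_combination ((a : ℂ) + d) * h0 + ((a : ℂ) + d) * h1 + ((a : ℂ) + d) * hsC

theorem numRange_transpose_mirror (p : ℝ) (hp : 1 < p) (a b c d : ℝ) :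
    numRange p (!![(a : ℂ), (b : ℂ); (c : ℂ), (d : ℂ)]).transpose =
      { w : ℂ | ∃ z ∈ numRange p !![(a : ℂ), (b : ℂ); (c : ℂ), (d : ℂ)],
          w = ((a : ℂ) + (d : ℂ)) - (starRingEnd ℂ) z } := by
  have htr : (!![(a : ℂ), (b : ℂ); (c : ℂ), (d : ℂ)]).transpose
      = !![(a : ℂ), (c : ℂ); (b : ℂ), (d : ℂ)] := by
    ext i j
    fin_cases i <;> fin_cases j <;> simp [Matrix.transpose_apply]
  rw [htr]
  ext w
  constructor
  · rintro ⟨y, hy, rfl⟩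
    obtain ⟨hn, hv⟩ := key_lemma p hp a c b d y hy
    refine ⟨_, ⟨_, hn, rfl⟩, ?_⟩
    rw [hv]
    simp only [map_sub, map_add, Complex.conj_conj, Complex.conj_ofReal]
    ring
  · rintro ⟨z, ⟨x, hx, rfl⟩, rfl⟩
    obtain ⟨hn, hv⟩ := key_lemma p hp a b c d x hx
    exact ⟨_, hn, hv.symm⟩
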